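/- Let Z be an n-dimensional naturally graded p-filiform complex Zinbiel algebra of first type, with natural gradation Z = Z_1 ⊕ ⋯ ⊕ Z_{n−p}, adapted basis {e_1, …, e_{n−p}, f_1, …, f_p} with e_i ∈ Z_i, and let r_i be defined by f_i ∈ Z_{r_i} with r_1 ≤ r_2 ≤ … ≤ r_p. Then r_s ≤ s for all 1 ≤ s ≤ p. -/
import Mathlib


open Module Submodule

/-- The Zinbiel identity for a bilinear operation `mul` on a complex vector space:
`(x∘y)∘z = x∘(y∘z) + x∘(z∘y)`. -/
def IsZinbiel {Z : Type*} [AddCommGroup Z] [Module ℂ Z] (mul : Z →ₗ[ℂ] Z →ₗ[ℂ] Z) : Prop :=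
  ∀ x y z : Z, mul (mul x y) z = mul x (mul y z) + mul x (mul z y)
/-- The square `Z ∘ Z` of the algebra. -/
def algSq {Z : Type*} [AddCommGroup Z] [Module ℂ Z] (mul : Z →ₗ[ℂ] Z →ₗ[ℂ] Z) :
    Submodule ℂ Z :=
  Submodule.span ℂ {z | ∃ x y, z = mul x y}
/-- `C(Z) = (n-p, 1, …, 1)` (`p`-filiformity) expressed via the left multiplication
operators: for every `x ∉ Z²` the nilpotent operator `L_x` satisfies `L_x^(n-p) = 0`
and has rank at most `n-p-1`; this says exactly that the Jordan type of every `L_x`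
is lexicographically at most `(n-p, 1, …, 1)`. -/
def CharSeqMax {Z : Type*} [AddCommGroup Z] [Module ℂ Z]
    (mul : Z →ₗ[ℂ] Z →ₗ[ℂ] Z) (n p : ℕ) : Prop :=
  ∀ x : Z, x ∉ algSq mul →
    ((mul x : Module.End ℂ Z) ^ (n - p) = 0) ∧
      Module.finrank ℂ (LinearMap.range (mul x)) ≤ n - p - 1
/-- The adapted family `e_1, …, e_m, f_1, …, f_p` indexed by `Fin m ⊕ Fin p`. -/
def adaptedFam {Z : Type*} (m p : ℕ) (e f : ℕ → Z) : Fin m ⊕ Fin p → Z :=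
  Sum.elim (fun i => e ((i : ℕ) + 1)) (fun j => f ((j : ℕ) + 1))

/-- Theorem: for an `n`-dimensional naturally graded `p`-filiform complex Zinbiel
algebra of first type, with `f_i ∈ Z_{r_i}` and `r_1 ≤ r_2 ≤ ⋯ ≤ r_p`, one has
`r_s ≤ s` for all `1 ≤ s ≤ p`. -/
theorem graded_p_filiform_r_le
    {Z : Type*} [AddCommGroup Z] [Module ℂ Z]
    (mul : Z →ₗ[ℂ] Z →ₗ[ℂ] Z) (hzin : IsZinbiel mul)
    (n p : ℕ) (hpn : p < n)
    (e f : ℕ → Z)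
    -- `{e_1, …, e_{n-p}, f_1, …, f_p}` is a basis of the `n`-dimensional algebra `Z`
    (hli : LinearIndependent ℂ (adaptedFam (n - p) p e f))
    (hsp : Submodule.span ℂ (Set.range (adaptedFam (n - p) p e f)) = ⊤)
    -- the basis is adapted of first type: `e_1 ∘ e_i = e_{i+1}`, `e_1 ∘ e_{n-p} = 0`,
    -- `e_1 ∘ f_j = 0`
    (hee : ∀ i, 1 ≤ i → i ≤ n - p - 1 → mul (e 1) (e i) = e (i + 1))
    (hetop : mul (e 1) (e (n - p)) = 0)
    (hef : ∀ j, 1 ≤ j → j ≤ p → mul (e 1) (f j) = 0)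
    -- the natural gradation `Z = Z_1 ⊕ ⋯ ⊕ Z_{n-p}` : `W i` is the `i`-th component,
    -- the gradation is multiplicative and generated in degree one
    -- (`Z_{i+1} = Z_1 ∘ Z_i`, coming from `Z_i = Z^i/Z^{i+1}`), and `e_i ∈ Z_i`
    (W : ℕ → Submodule ℂ Z)
    (hW0 : W 0 = ⊥)
    (hWhigh : ∀ i, n - p < i → W i = ⊥)
    (hWint : DirectSum.IsInternal W)
    (hWmul : ∀ i j, ∀ x ∈ W i, ∀ y ∈ W j, mul x y ∈ W (i + j))
    (hWgen : ∀ i, 1 ≤ i → W (i + 1) = Submodule.span ℂ {z | ∃ x ∈ W 1, ∃ y ∈ W i, z = mul x y})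
    (heW : ∀ i, 1 ≤ i → i ≤ n - p → e i ∈ W i)
    -- `Z` is `p`-filiform with characteristic vector `e_1 ∉ Z²`
    (hfil : CharSeqMax mul n p)
    (he1sq : e 1 ∉ algSq mul)
    (r : ℕ → ℕ)
    (hrmem : ∀ i, 1 ≤ i → i ≤ p → f i ∈ W (r i))
    (hrmono : ∀ i j, 1 ≤ i → i ≤ j → j ≤ p → r i ≤ r j)
    (hrrange : ∀ i, 1 ≤ i → i ≤ p → 1 ≤ r i ∧ r i ≤ n - p) :
    ∀ q, 1 ≤ q → q ≤ p → r q ≤ q := by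
  intro q
  induction q using Nat.strong_induction_on with
  | _ q IH =>
  intro hq1 hqp
  by_contra hcon
  push_neg at hcon
  -- set k = r q - 1
  set N := n - p with hN
  set k := r q - 1 with hkdef
  have hrq : r q = k + 1 := by omega
  have hk1 : 1 ≤ k := by omega
  have hkq : q ≤ k := by omega
  have hkN : k + 1 ≤ N := by
    have := (hrrange q hq1 hqp).2; omega
  have hN2 : 2 ≤ N := by omega
  -- e_i ∘ e_1 = i • e_{i+1}
  have ee1 : ∀ i, 1 ≤ i → i ≤ N - 1 → mul (e i) (e 1) = (i : ℂ) • e (i + 1) := by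
    intro i
    induction i with
    | zero => omega
    | succ j ih =>
      intro _ hle
      rcases Nat.eq_zero_or_pos j with rfl | hj
      · rw [hee 1 le_rfl (by omega)]
        norm_num
      · have h1 : mul (e 1) (e j) = e (j + 1) := hee j hj (by omega)
        have h2 := hzin (e 1) (e j) (e 1)
        rw [h1, ih hj (by omega), map_smul, hee (j + 1) (by omega) (by omega)] at h2
        rw [h2]
        push_cast
        rw [add_smul, one_smul]
  -- projection onto W k
  obtain ⟨π, hπ⟩ : ∃ π : Z →ₗ[ℂ] Z, ∀ j x, x ∈ W j → π x = if j = k then x else 0 := by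
    refine ⟨(W k).subtype ∘ₗ (DirectSum.component ℂ ℕ (fun i => ↥(W i)) k) ∘ₗ
      (LinearEquiv.ofBijective (DirectSum.coeLinearMap W) hWint).symm.toLinearMap, ?_⟩
    intro j x hx
    by_cases h : j = k
    · subst h
      simp [← DirectSum.apply_eq_component, hWint.ofBijective_coeLinearMap_of_mem hx]
    · simp [← DirectSum.apply_eq_component, hWint.ofBijective_coeLinearMap_of_mem_ne h hx, h]
  -- no f_j lies in degree k
  have hrk : ∀ j, 1 ≤ j → j ≤ p → r j ≠ k := by
    intro j hj1 hjp
    rcases lt_or_ge j q with hlt | hge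
    · have := IH j hlt hj1 (by omega)
      omega
    · have := hrmono q j hq1 hge hjp
      omega
  -- W k = ℂ e k
  have hWk : ∀ w ∈ W k, ∃ a : ℂ, w = a • e k := by
    intro w hw
    obtain ⟨c, hc⟩ : ∃ c : Fin N ⊕ Fin p → ℂ, ∑ i, c i • adaptedFam N p e f i = w := by
      rw [← mem_span_range_iff_exists_fun, hsp]; trivial
    have hπw : π w = w := by rw [hπ k w hw, if_pos rfl]
    have key : π w = c (Sum.inl ⟨k - 1, by omega⟩) • e k := by
      rw [← hc, map_sum]
      rw [Fintype.sum_sum_type]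
      have h2 : ∀ j : Fin p, π (c (Sum.inr j) • adaptedFam N p e f (Sum.inr j)) = 0 := by
        intro j
        rw [map_smul]
        have : π (adaptedFam N p e f (Sum.inr j)) = 0 := by
          have hm := hrmem (j + 1) (by omega) (by omega)
          rw [show adaptedFam N p e f (Sum.inr j) = f ((j : ℕ) + 1) from rfl,
            hπ _ _ hm, if_neg (hrk ((j : ℕ) + 1) (by omega) (by omega))]
        rw [this, smul_zero]
      rw [Finset.sum_congr rfl (fun j _ => h2 j), Finset.sum_const_zero, add_zero]
      have h1 : ∀ i : Fin N, π (c (Sum.inl i) • adaptedFam N p e f (Sum.inl i)) =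
          if i = (⟨k - 1, by omega⟩ : Fin N) then c (Sum.inl i) • e k else 0 := by
        intro i
        rw [map_smul]
        have hm := heW ((i : ℕ) + 1) (by omega) (by omega)
        rw [show adaptedFam N p e f (Sum.inl i) = e ((i : ℕ) + 1) from rfl, hπ _ _ hm]
        by_cases h : (i : ℕ) + 1 = k
        · rw [if_pos h, if_pos (by ext; simp; omega), h]
        · rw [if_neg h, smul_zero, if_neg (by intro hh; apply h; rw [hh]; simp; omega)]
      rw [Finset.sum_congr rfl (fun i _ => h1 i), Finset.sum_ite_eq' Finset.univ]
      rw [if_pos (Finset.mem_univ _)]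
    exact ⟨c (Sum.inl ⟨k - 1, by omega⟩), by rw [← hπw, key]⟩
  -- main descent: for g ∈ W (k+1-m), g ∘ e_m ∈ ℂ e_{k+1}
  have hP : ∀ m, 1 ≤ m → m ≤ k → ∀ g ∈ W (k + 1 - m), ∃ c : ℂ, mul g (e m) = c • e (k + 1) := by
    intro m
    induction m with
    | zero => omega
    | succ t ihm =>
      intro _ hmk g hg
      rcases Nat.eq_zero_or_pos t with rfl | ht
      · -- m = 1 : g ∈ W k
        obtain ⟨a, rfl⟩ := hWk g (by simpa using hg)
        refine ⟨a * (k : ℂ), ?_⟩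
        rw [map_smul, LinearMap.smul_apply, ee1 k hk1 (by omega), smul_smul]
      · -- m = t+1, t ≥ 1
        have hg1 : mul g (e 1) ∈ W (k + 1 - t) := by
          have := hWmul (k + 1 - (t + 1)) 1 g hg (e 1) (heW 1 le_rfl (by omega))
          have heq : k + 1 - (t + 1) + 1 = k + 1 - t := by omega
          rwa [heq] at this
        obtain ⟨c, hc⟩ := ihm ht (by omega) (mul g (e 1)) hg1
        have hz := hzin g (e 1) (e t)
        rw [hee t ht (by omega), ee1 t ht (by omega), map_smul] at hz
        refine ⟨c / ((t : ℂ) + 1), ?_⟩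
        have ht0 : (t : ℂ) + 1 ≠ 0 := Nat.cast_add_one_ne_zero t
        have : ((t : ℂ) + 1) • mul g (e (t + 1)) = c • e (k + 1) := by
          rw [add_smul, one_smul, add_comm, ← hz, hc]
        rw [div_eq_mul_inv, mul_comm, ← smul_smul, ← this, smul_smul,
          inv_mul_cancel₀ ht0, one_smul]
  -- W (k+1) ⊆ ℂ e (k+1)
  have hsub : W (k + 1) ≤ ℂ ∙ e (k + 1) := by
    rw [hWgen k hk1]
    rw [Submodule.span_le]
    rintro z ⟨x, hx, y, hy, rfl⟩
    obtain ⟨a, rfl⟩ := hWk y hy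
    obtain ⟨c, hc⟩ := hP k hk1 le_rfl x (by simpa using hx)
    rw [map_smul, hc, smul_smul]
    exact Submodule.mem_span_singleton.mpr ⟨a * c, rfl⟩
  -- f q ∈ ℂ e (k+1): contradiction with linear independence
  have hfq : f q ∈ ℂ ∙ e (k + 1) := hsub (by rw [← hrq]; exact hrmem q hq1 hqp)
  obtain ⟨a, ha⟩ := Submodule.mem_span_singleton.mp hfq
  have hVq : adaptedFam N p e f (Sum.inr ⟨q - 1, by omega⟩) = f q := by
    simp [adaptedFam]; congr 1; omega
  have hVe : adaptedFam N p e f (Sum.inl ⟨k, by omega⟩) = e (k + 1) := rfl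
  have hrel := linearIndependent_iff.mp hli
    (Finsupp.single (Sum.inr ⟨q - 1, by omega⟩) 1 - Finsupp.single (Sum.inl ⟨k, by omega⟩) a) ?_
  · have := DFunLike.congr_fun hrel (Sum.inr ⟨q - 1, by omega⟩)
    simp [Finsupp.single_apply] at this
  · rw [map_sub, Finsupp.linearCombination_single, Finsupp.linearCombination_single, one_smul,
      hVq, hVe, ← ha, sub_self]
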